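/- Consider ℝ⁴ with a linear map J satisfying J² = −id and a nondegenerate symmetric bilinear form φ of neutral signature (2,2) with φ(Jx,Jy) = φ(x,y). Let F, D be nilpotent φ-skewsymmetric linear endomorphisms of ℝ⁴ with F ≠ 0, F∘D = D∘F, and (F + J∘D)∘J = J∘(F + J∘D). Then Ker(F) = J(Ker(F)) = Im(F); in particular Ker(F) is a 2-dimensional J-invariant totally isotropic subspace. -/

import Mathlib

open TensorProduct

/-- A pseudo-Hermitian quadratic Lie algebra structure on a real vector space `V`:
`br` is a Lie bracket, `J` is an integrable complex structure, and `φ` is a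
nondegenerate symmetric invariant bilinear form compatible with `J`. -/
structure IsPHQ (V : Type*) [AddCommGroup V] [Module ℝ V]
    (br : V → V → V) (J : V → V) (φ : V → V → ℝ) : Prop where
  br_add_left : ∀ x y z : V, br (x + y) z = br x z + br y z
  br_smul_left : ∀ (c : ℝ) (x z : V), br (c • x) z = c • br x z
  br_skew : ∀ x y : V, br x y = - br y x
  jacobi : ∀ x y z : V, br x (br y z) + br y (br z x) + br z (br x y) = 0
  J_add : ∀ x y : V, J (x + y) = J x + J y
  J_smul : ∀ (c : ℝ) (x : V), J (c • x) = c • J x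
  J_sq : ∀ x : V, J (J x) = - x
  integrable : ∀ x y : V, br x y + J (br (J x) y) + J (br x (J y)) - br (J x) (J y) = 0
  phi_add_left : ∀ x y z : V, φ (x + y) z = φ x z + φ y z
  phi_smul_left : ∀ (c : ℝ) (x y : V), φ (c • x) y = c * φ x y
  phi_symm : ∀ x y : V, φ x y = φ y x
  phi_nondeg : ∀ x : V, (∀ y : V, φ x y = 0) → x = 0
  phi_invariant : ∀ x y z : V, φ (br x y) z + φ y (br x z) = 0
  phi_hermitian : ∀ x y : V, φ (J x) (J y) = φ x y

/-- Equivalence of pseudo-Hermitian quadratic Lie algebras: a linear isomorphism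
intertwining the brackets and the complex structures and preserving the metrics. -/
def PHQEquiv {V W : Type*} [AddCommGroup V] [Module ℝ V] [AddCommGroup W] [Module ℝ W]
    (brV : V → V → V) (JV : V → V) (φV : V → V → ℝ)
    (brW : W → W → W) (JW : W → W) (φW : W → W → ℝ) : Prop :=
  ∃ ψ : V ≃ₗ[ℝ] W, (∀ x y, ψ (brV x y) = brW (ψ x) (ψ y)) ∧
    (∀ x, ψ (JV x) = JW (ψ x)) ∧ ∀ x y, φW (ψ x) (ψ y) = φV x y

/-- Lower central series of a subalgebra `W` with respect to a bracket `br`. -/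
def lcsW {V : Type*} [AddCommGroup V] [Module ℝ V] (br : V → V → V)
    (W : Submodule ℝ V) : ℕ → Submodule ℝ V
  | 0 => W
  | n + 1 => Submodule.span ℝ {w : V | ∃ x ∈ lcsW br W n, ∃ y ∈ W, w = br x y}

/-- `φ` has signature `(a, b)`: there is an orthogonal decomposition into a
negative definite subspace of dimension `a` and a positive definite subspace of
dimension `b` (the convention of the paper, where positive definite is `(0, 2n)`). -/
def hasSignature {V : Type*} [AddCommGroup V] [Module ℝ V]
    (φ : V → V → ℝ) (a b : ℕ) : Prop :=
  ∃ N P : Submodule ℝ V, N ⊓ P = ⊥ ∧ N ⊔ P = ⊤ ∧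
    (∀ x ∈ N, ∀ y ∈ P, φ x y = 0) ∧
    (∀ x ∈ N, x ≠ 0 → φ x x < 0) ∧ (∀ x ∈ P, x ≠ 0 → 0 < φ x x) ∧
    Module.finrank ℝ N = a ∧ Module.finrank ℝ P = b

/-- The bracket of the pHQ-double extension `g = ℝz ⊕ ℝz' ⊕ g₀ ⊕ ℝv' ⊕ ℝv`,
with an element `(a, b, x, c, d)` standing for `a·z + b·z' + x + c·v' + d·v`. -/
def extBr {V : Type*} [AddCommGroup V] [Module ℝ V]
    (br₀ : V → V → V) (φ₀ : V → V → ℝ) (D F : V → V) (s₀ : V) :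
    (ℝ × ℝ × V × ℝ × ℝ) → (ℝ × ℝ × V × ℝ × ℝ) → (ℝ × ℝ × V × ℝ × ℝ) :=
  fun P Q =>
    (φ₀ (F P.2.2.1) Q.2.2.1 + P.2.2.2.1 * φ₀ s₀ Q.2.2.1 - Q.2.2.2.1 * φ₀ s₀ P.2.2.1,
     φ₀ (D P.2.2.1) Q.2.2.1 - P.2.2.2.2 * φ₀ s₀ Q.2.2.1 + Q.2.2.2.2 * φ₀ s₀ P.2.2.1,
     br₀ P.2.2.1 Q.2.2.1 + P.2.2.2.2 • F Q.2.2.1 - Q.2.2.2.2 • F P.2.2.1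
       + P.2.2.2.1 • D Q.2.2.1 - Q.2.2.2.1 • D P.2.2.1
       + (P.2.2.2.2 * Q.2.2.2.1 - P.2.2.2.1 * Q.2.2.2.2) • s₀,
     0, 0)

/-- The complex structure of the pHQ-double extension:
`Jz = z'`, `Jz' = -z`, `Jv = v'`, `Jv' = -v`, `Jx = J₀x`. -/
def extJ {V : Type*} [AddCommGroup V] [Module ℝ V] (J₀ : V → V) :
    (ℝ × ℝ × V × ℝ × ℝ) → (ℝ × ℝ × V × ℝ × ℝ) :=
  fun P => (-P.2.1, P.1, J₀ P.2.2.1, P.2.2.2.2, -P.2.2.2.1)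

/-- The metric of the pHQ-double extension: `φ(z,v) = φ(z',v') = 1` and `φ₀` on `g₀`. -/
def extPhi {V : Type*} [AddCommGroup V] [Module ℝ V] (φ₀ : V → V → ℝ) :
    (ℝ × ℝ × V × ℝ × ℝ) → (ℝ × ℝ × V × ℝ × ℝ) → ℝ :=
  fun P Q => P.1 * Q.2.2.2.2 + P.2.2.2.2 * Q.1 + P.2.1 * Q.2.2.2.1 + P.2.2.2.1 * Q.2.1
    + φ₀ P.2.2.1 Q.2.2.1

/-- The data `(D, F, s₀)` needed for a pHQ-double extension of `(g₀, br₀, J₀, φ₀)`: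
`D`, `F` are `φ₀`-skewsymmetric derivations with `[F + J₀D, J₀] = 0` and
`[F, D] = ad_{g₀}(s₀)`. -/
def IsPHQDblExtData (V : Type*) [AddCommGroup V] [Module ℝ V]
    (br₀ : V → V → V) (J₀ : V → V) (φ₀ : V → V → ℝ) (D F : V → V) (s₀ : V) : Prop :=
  (∀ x y, D (x + y) = D x + D y) ∧ (∀ (c : ℝ) (x : V), D (c • x) = c • D x) ∧
  (∀ x y, F (x + y) = F x + F y) ∧ (∀ (c : ℝ) (x : V), F (c • x) = c • F x) ∧
  (∀ x y, φ₀ (D x) y = - φ₀ x (D y)) ∧ (∀ x y, φ₀ (F x) y = - φ₀ x (F y)) ∧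
  (∀ x y, D (br₀ x y) = br₀ (D x) y + br₀ x (D y)) ∧
  (∀ x y, F (br₀ x y) = br₀ (F x) y + br₀ x (F y)) ∧
  (∀ x, F (J₀ x) + J₀ (D (J₀ x)) = J₀ (F x) + J₀ (J₀ (D x))) ∧
  (∀ x, F (D x) - D (F x) = br₀ s₀ x)

/-! ### Concrete models -/

/-- Standard complex structure on `ℝ²`. -/
def j2 : (Fin 2 → ℝ) → (Fin 2 → ℝ) := fun x => ![-x 1, x 0]

/-- Positive definite Hermitian metric on `ℝ²` (the algebra `ℝ^{2,0}`). -/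
def phi2 : (Fin 2 → ℝ) → (Fin 2 → ℝ) → ℝ := fun x y => x 0 * y 0 + x 1 * y 1

/-- Complex structure of the 6-dimensional Lie algebra `ℒ`, on the ordered basis
`x₁, Jx₁, x₂, Jx₂, x₃, Jx₃`. -/
def j6 : (Fin 6 → ℝ) → (Fin 6 → ℝ) := fun x => ![-x 1, x 0, -x 3, x 2, -x 5, x 4]

/-- Bracket of `ℒ`: `[x₁, Jx₁] = x₂`, `[x₁, x₂] = -Jx₃`, `[Jx₁, x₂] = x₃` on the
ordered basis `x₁, Jx₁, x₂, Jx₂, x₃, Jx₃`. -/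
def brL : (Fin 6 → ℝ) → (Fin 6 → ℝ) → (Fin 6 → ℝ) := fun x y =>
  ![0, 0, x 0 * y 1 - x 1 * y 0, 0, x 1 * y 2 - x 2 * y 1, -(x 0 * y 2 - x 2 * y 0)]

/-- The metric of `ℒ^{4,2}`: `φ(x₁,x₃) = φ(Jx₁,Jx₃) = 1`, `φ(x₂,x₂) = φ(Jx₂,Jx₂) = 1`. -/
def phiL : (Fin 6 → ℝ) → (Fin 6 → ℝ) → ℝ := fun x y =>
  x 0 * y 4 + x 4 * y 0 + x 1 * y 5 + x 5 * y 1 + x 2 * y 2 + x 3 * y 3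

/-- Complex structure on `ℝ⁸`, ordered basis `x₁, x₂, x₃, x₄, x₁*, x₂*, x₃*, x₄*` with
`Jx₁ = x₂`, `Jx₃ = x₄`, `Jx₁* = x₂*`, `Jx₃* = x₄*`. -/
def j8 : (Fin 8 → ℝ) → (Fin 8 → ℝ) := fun x =>
  ![-x 1, x 0, -x 3, x 2, -x 5, x 4, -x 7, x 6]

/-- The metric `φ(xᵢ, xⱼ*) = δᵢⱼ` of the `T*`-extensions of the Kodaira–Thurston algebra. -/
def phi8 : (Fin 8 → ℝ) → (Fin 8 → ℝ) → ℝ := fun x y =>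
  x 0 * y 4 + x 4 * y 0 + x 1 * y 5 + x 5 * y 1 + x 2 * y 6 + x 6 * y 2
    + x 3 * y 7 + x 7 * y 3

/-- A neutral pseudo-Hermitian metric on abelian `ℝ⁸` (the algebra `ℝ^{4,4}`). -/
def phi44 : (Fin 8 → ℝ) → (Fin 8 → ℝ) → ℝ := fun x y =>
  x 0 * y 0 + x 1 * y 1 + x 2 * y 2 + x 3 * y 3
    - x 4 * y 4 - x 5 * y 5 - x 6 * y 6 - x 7 * y 7

/-- Bracket of `T*₀k`: `[x₁,x₂] = x₃`, `[x₃*,x₁] = x₂*`, `[x₃*,x₂] = -x₁*`. -/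
def brT0 : (Fin 8 → ℝ) → (Fin 8 → ℝ) → (Fin 8 → ℝ) := fun x y =>
  ![0, 0, x 0 * y 1 - x 1 * y 0, 0,
    -(x 6 * y 1 - x 1 * y 6), x 6 * y 0 - x 0 * y 6, 0, 0]

/-- Bracket of `T*_{θ₃}k`: `[x₁,x₂] = x₃`, `[x₁,x₃] = x₄*`, `[x₁,x₄] = -x₃*`,
`[x₃,x₄] = x₁*`, `[x₃*,x₁] = x₂*`, `[x₃*,x₂] = -x₁*`. -/
def brT3 : (Fin 8 → ℝ) → (Fin 8 → ℝ) → (Fin 8 → ℝ) := fun x y =>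
  ![0, 0, x 0 * y 1 - x 1 * y 0, 0,
    (x 2 * y 3 - x 3 * y 2) - (x 6 * y 1 - x 1 * y 6),
    x 6 * y 0 - x 0 * y 6,
    -(x 0 * y 3 - x 3 * y 0),
    x 0 * y 2 - x 2 * y 0]

/-- Bracket of `T*_{αθ₁}k`: `[x₁,x₂] = x₃ + αx₃*`, `[x₁,x₃] = -αx₂*`, `[x₂,x₃] = αx₁*`,
`[x₃*,x₁] = x₂*`, `[x₃*,x₂] = -x₁*`. -/
def brTal (α : ℝ) : (Fin 8 → ℝ) → (Fin 8 → ℝ) → (Fin 8 → ℝ) := fun x y =>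
  ![0, 0, x 0 * y 1 - x 1 * y 0, 0,
    α * (x 1 * y 2 - x 2 * y 1) - (x 6 * y 1 - x 1 * y 6),
    -(α * (x 0 * y 2 - x 2 * y 0)) + (x 6 * y 0 - x 0 * y 6),
    α * (x 0 * y 1 - x 1 * y 0), 0]

/-- Bracket of the Kodaira–Thurston algebra `k`: `[x₁, x₂] = x₃`. -/
def brK : (Fin 4 → ℝ) → (Fin 4 → ℝ) → (Fin 4 → ℝ) := fun x y =>
  ![0, 0, x 0 * y 1 - x 1 * y 0, 0]

/-- The abelian complex structure of the Kodaira–Thurston algebra: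
`Jx₁ = x₂`, `Jx₂ = -x₁`, `Jx₃ = x₄`, `Jx₄ = -x₃`. -/
def jK : (Fin 4 → ℝ) → (Fin 4 → ℝ) := fun x => ![-x 1, x 0, -x 3, x 2]

/-- The dual basis vectors `xᵢ*` of `k*`. -/
noncomputable def p4 (i : Fin 4) : Module.Dual ℝ (Fin 4 → ℝ) := LinearMap.proj i

/-- The cyclic cocycle `θ₁`. -/
noncomputable def th1 : (Fin 4 → ℝ) → (Fin 4 → ℝ) → Module.Dual ℝ (Fin 4 → ℝ) := fun x y =>
  (x 0 * y 1 - x 1 * y 0) • p4 2 - (x 0 * y 2 - x 2 * y 0) • p4 1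
    + (x 1 * y 2 - x 2 * y 1) • p4 0

/-- The cyclic cocycle `θ₂`. -/
noncomputable def th2 : (Fin 4 → ℝ) → (Fin 4 → ℝ) → Module.Dual ℝ (Fin 4 → ℝ) := fun x y =>
  (x 0 * y 1 - x 1 * y 0) • p4 3 - (x 0 * y 3 - x 3 * y 0) • p4 1
    + (x 1 * y 3 - x 3 * y 1) • p4 0

/-- The cyclic cocycle `θ₃`. -/
noncomputable def th3 : (Fin 4 → ℝ) → (Fin 4 → ℝ) → Module.Dual ℝ (Fin 4 → ℝ) := fun x y =>
  (x 0 * y 2 - x 2 * y 0) • p4 3 - (x 0 * y 3 - x 3 * y 0) • p4 2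
    + (x 2 * y 3 - x 3 * y 2) • p4 0

/-- The cyclic cocycle `θ₄`. -/
noncomputable def th4 : (Fin 4 → ℝ) → (Fin 4 → ℝ) → Module.Dual ℝ (Fin 4 → ℝ) := fun x y =>
  (x 1 * y 2 - x 2 * y 1) • p4 3 - (x 1 * y 3 - x 3 * y 1) • p4 2
    + (x 2 * y 3 - x 3 * y 2) • p4 1


section Frame
variable (φ : (Fin 4 → ℝ) → (Fin 4 → ℝ) → ℝ)
  (hadd : ∀ x y z : Fin 4 → ℝ, φ (x + y) z = φ x z + φ y z)
  (hsmul : ∀ (c : ℝ) (x y : Fin 4 → ℝ), φ (c • x) y = c * φ x y)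
  (hsymm : ∀ x y : Fin 4 → ℝ, φ x y = φ y x)
  (hnondeg : ∀ x : Fin 4 → ℝ, (∀ y : Fin 4 → ℝ, φ x y = 0) → x = 0)

include hadd hsmul in
lemma phi_zero_left : ∀ y, φ 0 y = 0 := by
  intro y
  have h : (0 : Fin 4 → ℝ) = (0:ℝ) • (0 : Fin 4 → ℝ) := by simp
  rw [h, hsmul]; ring

include hadd hsmul in
lemma phi_sum_left : ∀ (s : Finset (Fin 4)) (f : Fin 4 → Fin 4 → ℝ) (y : Fin 4 → ℝ),
    φ (∑ i ∈ s, f i) y = ∑ i ∈ s, φ (f i) y := by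
  intro s f y
  induction s using Finset.induction_on with
  | empty => simpa using phi_zero_left φ hadd hsmul y
  | insert a s hx ih => rw [Finset.sum_insert hx, Finset.sum_insert hx, hadd, ih]

include hadd hsmul in
lemma phi_sub_left : ∀ x y z : Fin 4 → ℝ, φ (x - y) z = φ x z - φ y z := by
  intro x y z
  have h : x - y = x + (-1:ℝ) • y := by
    rw [neg_one_smul]; abel
  rw [h, hadd, hsmul]; ring

include hadd hsmul hsymm hnondeg in
lemma frame_expand (e : Fin 4 → (Fin 4 → ℝ)) (ε : Fin 4 → ℝ)
    (hε : ∀ i, ε i * ε i = 1)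
    (hee : ∀ i j, φ (e i) (e j) = if i = j then ε i else 0) :
    ∀ v, v = ∑ i, (ε i * φ v (e i)) • e i := by
  have hεne : ∀ i, ε i ≠ 0 := by
    intro i h; have := hε i; rw [h] at this; norm_num at this
  have li : LinearIndependent ℝ e := by
    rw [Fintype.linearIndependent_iff]
    intro g hg j
    have h1 := congrArg (fun z => φ z (e j)) hg
    simp only [phi_sum_left φ hadd hsmul, phi_zero_left φ hadd hsmul] at h1
    have h2 : ∀ i, φ (g i • e i) (e j) = if i = j then g i * ε i else 0 := by
      intro i; rw [hsmul, hee, mul_ite, mul_zero]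
    rw [Finset.sum_congr rfl (fun i _ => h2 i)] at h1
    rw [Finset.sum_ite_eq' Finset.univ j (fun i => g i * ε i)] at h1
    simp only [Finset.mem_univ, if_true] at h1
    exact (mul_eq_zero.mp h1).resolve_right (hεne j)
  have hsp : Submodule.span ℝ (Set.range e) = ⊤ := by
    apply Submodule.eq_top_of_finrank_eq
    rw [finrank_span_eq_card li]
    simp [Module.finrank_fin_fun]
  intro v
  set w := v - ∑ i, (ε i * φ v (e i)) • e i with hw
  have hwj : ∀ j, φ w (e j) = 0 := by
    intro j
    rw [hw, phi_sub_left φ hadd hsmul, phi_sum_left φ hadd hsmul]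
    have h2 : ∀ i, φ ((ε i * φ v (e i)) • e i) (e j)
        = if i = j then ε i * φ v (e i) * ε i else 0 := by
      intro i; rw [hsmul, hee, mul_ite, mul_zero]
    rw [Finset.sum_congr rfl (fun i _ => h2 i),
      Finset.sum_ite_eq' Finset.univ j (fun i => ε i * φ v (e i) * ε i)]
    simp only [Finset.mem_univ, if_true]
    have heq : ε j * φ v (e j) * ε j = φ v (e j) := by
      have h := hε j
      calc ε j * φ v (e j) * ε j = (ε j * ε j) * φ v (e j) := by ring
        _ = φ v (e j) := by rw [h]; ring
    rw [heq]; ring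
  have hall : ∀ y, φ w y = 0 := by
    intro y
    have hy : y ∈ Submodule.span ℝ (Set.range e) := by rw [hsp]; trivial
    induction hy using Submodule.span_induction with
    | mem x hx => obtain ⟨i, rfl⟩ := hx; exact hwj i
    | zero => rw [hsymm]; exact phi_zero_left φ hadd hsmul w
    | add a b _ _ ha hb =>
        rw [hsymm, hadd, hsymm a w, hsymm b w] at *
        rw [ha, hb]; ring
    | smul c a _ ha =>
        rw [hsymm, hsmul, hsymm a w, ha]; ring
  have := hnondeg w hall
  rw [hw] at this
  exact (sub_eq_zero.mp this)

include hadd hsmul hsymm hnondeg in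
lemma frame_phi (e : Fin 4 → (Fin 4 → ℝ)) (ε : Fin 4 → ℝ)
    (hε : ∀ i, ε i * ε i = 1)
    (hee : ∀ i j, φ (e i) (e j) = if i = j then ε i else 0) :
    ∀ u v, φ u v = ∑ i, ε i * (φ u (e i) * φ v (e i)) := by
  intro u v
  have hexp := frame_expand φ hadd hsmul hsymm hnondeg e ε hε hee u
  calc φ u v = φ (∑ i, (ε i * φ u (e i)) • e i) v := by rw [← hexp]
    _ = ∑ i, (ε i * φ u (e i)) * φ (e i) v := by
        rw [phi_sum_left φ hadd hsmul]
        exact Finset.sum_congr rfl (fun i _ => hsmul _ _ _)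
    _ = ∑ i, ε i * (φ u (e i) * φ v (e i)) := by
        exact Finset.sum_congr rfl (fun i _ => by rw [hsymm (e i) v]; ring)

include hadd hsmul hsymm in
lemma frame_build (J : (Fin 4 → ℝ) →ₗ[ℝ] (Fin 4 → ℝ))
    (hJ2 : ∀ x : Fin 4 → ℝ, J (J x) = -x)
    (hherm : ∀ x y : Fin 4 → ℝ, φ (J x) (J y) = φ x y)
    (a b : Fin 4 → ℝ) (sa sb : ℝ)
    (haa : φ a a = sa) (hbb : φ b b = sb) (hab : φ a b = 0) (haJb : φ a (J b) = 0) :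
    ∀ i j, φ (![a, J a, b, J b] i) (![a, J a, b, J b] j)
      = if i = j then (![sa, sa, sb, sb] : Fin 4 → ℝ) i else 0 := by
  have hJskew : ∀ x y : Fin 4 → ℝ, φ (J x) y = - φ x (J y) := by
    intro x y
    have h1 : φ (J x) (J (J y)) = φ x (J y) := hherm x (J y)
    have h2 : J (J y) = -y := hJ2 y
    rw [h2] at h1
    have h3 : φ (J x) (-y) = - φ (J x) y := by
      rw [show -y = (-1:ℝ) • y by simp, hsymm, hsmul, hsymm]; ring
    rw [h3] at h1
    linarith
  have hxJx : ∀ x : Fin 4 → ℝ, φ x (J x) = 0 := by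
    intro x
    have h1 : φ (J x) x = - φ x (J x) := hJskew x x
    rw [hsymm (J x) x] at h1
    linarith
  have k1 : φ (J a) a = 0 := by rw [hsymm]; exact hxJx a
  have k1' : φ a (J a) = 0 := hxJx a
  have k2 : φ (J a) (J a) = sa := by rw [hherm]; exact haa
  have kba : φ b a = 0 := by rw [hsymm]; exact hab
  have kbJa : φ b (J a) = 0 := by
    have h1 : φ (J b) a = - φ b (J a) := hJskew b a
    rw [hsymm (J b) a] at h1
    rw [haJb] at h1
    linarith
  have kJab : φ (J a) b = 0 := by rw [hsymm]; exact kbJa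
  have kJba : φ (J b) a = 0 := by rw [hsymm]; exact haJb
  have kJaJb : φ (J a) (J b) = 0 := by rw [hherm]; exact hab
  have kJbJa : φ (J b) (J a) = 0 := by rw [hherm]; exact kba
  have kbJb : φ b (J b) = 0 := hxJx b
  have kJbb : φ (J b) b = 0 := by rw [hsymm]; exact kbJb
  have kJbJb : φ (J b) (J b) = sb := by rw [hherm]; exact hbb
  intro i j
  fin_cases i <;> fin_cases j <;>
    simp [haa, hbb, hab, haJb, k1, k1', k2, kba, kbJa, kJab, kJba, kJaJb, kJbJa,
      kbJb, kJbb, kJbJb]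
end Frame

set_option maxHeartbeats 1000000 in
/-- for nilpotent commuting skewsymmetric `F ≠ 0`, `D` on neutral
pseudo-Hermitian `ℝ⁴` with `[F + JD, J] = 0`, one has
`Ker F = J(Ker F) = Im F`; in particular `Ker F` is a 2-dimensional `J`-invariant
totally isotropic subspace. -/
theorem stmt_14
    (φ : (Fin 4 → ℝ) → (Fin 4 → ℝ) → ℝ)
    (hadd : ∀ x y z : Fin 4 → ℝ, φ (x + y) z = φ x z + φ y z)
    (hsmul : ∀ (c : ℝ) (x y : Fin 4 → ℝ), φ (c • x) y = c * φ x y)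
    (hsymm : ∀ x y : Fin 4 → ℝ, φ x y = φ y x)
    (hnondeg : ∀ x : Fin 4 → ℝ, (∀ y : Fin 4 → ℝ, φ x y = 0) → x = 0)
    (hsig : hasSignature φ 2 2)
    (J : (Fin 4 → ℝ) →ₗ[ℝ] (Fin 4 → ℝ))
    (hJ2 : ∀ x : Fin 4 → ℝ, J (J x) = -x)
    (hherm : ∀ x y : Fin 4 → ℝ, φ (J x) (J y) = φ x y)
    (F D : (Fin 4 → ℝ) →ₗ[ℝ] (Fin 4 → ℝ))
    (hFnil : ∃ k, F ^ k = 0) (hDnil : ∃ k, D ^ k = 0)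
    (hFskew : ∀ x y : Fin 4 → ℝ, φ (F x) y = - φ x (F y))
    (hDskew : ∀ x y : Fin 4 → ℝ, φ (D x) y = - φ x (D y))
    (hF0 : F ≠ 0)
    (hFD : ∀ x : Fin 4 → ℝ, F (D x) = D (F x))
    (hJcond : ∀ x : Fin 4 → ℝ, F (J x) + J (D (J x)) = J (F x) + J (J (D x))) :
    Submodule.map J (LinearMap.ker F) = LinearMap.ker F ∧
    LinearMap.range F = LinearMap.ker F ∧
    Module.finrank ℝ (LinearMap.ker F) = 2 ∧
    (∀ x ∈ LinearMap.ker F, J x ∈ LinearMap.ker F) ∧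
    (∀ x ∈ LinearMap.ker F, ∀ y ∈ LinearMap.ker F, φ x y = 0) := by
    classical
  -- ## basic φ helpers
  have h0l : ∀ y, φ 0 y = 0 := phi_zero_left φ hadd hsmul
  have h0r : ∀ x, φ x 0 = 0 := fun x => by rw [hsymm]; exact h0l x
  have haddr : ∀ x y z : Fin 4 → ℝ, φ x (y + z) = φ x y + φ x z := fun x y z => by
    rw [hsymm, hadd, hsymm y x, hsymm z x]
  have hsmulr : ∀ (c : ℝ) (x y : Fin 4 → ℝ), φ x (c • y) = c * φ x y := fun c x y => by
    rw [hsymm, hsmul, hsymm]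
  have hnegl : ∀ x y : Fin 4 → ℝ, φ (-x) y = - φ x y := fun x y => by
    rw [show -x = (-1:ℝ) • x by simp, hsmul]; ring
  have hnegr : ∀ x y : Fin 4 → ℝ, φ x (-y) = - φ x y := fun x y => by
    rw [hsymm, hnegl, hsymm]
  have hsubl : ∀ x y z : Fin 4 → ℝ, φ (x - y) z = φ x z - φ y z :=
    phi_sub_left φ hadd hsmul
  have hsubr : ∀ x y z : Fin 4 → ℝ, φ x (y - z) = φ x y - φ x z := fun x y z => by
    rw [hsymm, hsubl, hsymm y x, hsymm z x]
  -- J is φ-skew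
  have hJskew : ∀ x y : Fin 4 → ℝ, φ (J x) y = - φ x (J y) := by
    intro x y
    have h1 : φ (J x) (J (J y)) = φ x (J y) := hherm x (J y)
    rw [hJ2, hnegr] at h1
    linarith
  have hxJx : ∀ x : Fin 4 → ℝ, φ x (J x) = 0 := by
    intro x
    have h1 : φ (J x) x = - φ x (J x) := hJskew x x
    rw [hsymm (J x) x] at h1
    linarith
  have hV4 : Module.finrank ℝ (Fin 4 → ℝ) = 4 := by
    simp [Module.finrank_fin_fun]
  -- normalization helper
  have hnorm : ∀ v : Fin 4 → ℝ, 0 < φ v v → ∃ u : Fin 4 → ℝ, φ u u = 1 ∧ ∃ c : ℝ, u = c • v := by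
    intro v hv
    set s := Real.sqrt (φ v v) with hsdef
    have hs : s * s = φ v v := Real.mul_self_sqrt hv.le
    have hs0 : s ≠ 0 := ne_of_gt (Real.sqrt_pos.mpr hv)
    refine ⟨s⁻¹ • v, ?_, _, rfl⟩
    rw [hsmul, hsmulr, ← hs]
    field_simp
  -- ## construction of the adapted frame
  obtain ⟨e1, e3, he11, he33, he13, he1J3, he1ne⟩ :
      ∃ e1 e3 : Fin 4 → ℝ, φ e1 e1 = 1 ∧ φ e3 e3 = -1 ∧ φ e1 e3 = 0 ∧
        φ e1 (J e3) = 0 ∧ e1 ≠ 0 := by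
    obtain ⟨N, Psub, hNP1, hNP2, hNP3, hNneg, hPpos, hdimN, hdimP⟩ := hsig
    have hPne : Psub ≠ ⊥ := by
      intro h; rw [h] at hdimP; simp at hdimP
    obtain ⟨p, hpP, hp0⟩ := Submodule.exists_mem_ne_zero_of_ne_bot hPne
    have hpp : 0 < φ p p := hPpos p hpP hp0
    obtain ⟨u1, hu11, c1, hc1⟩ := hnorm p hpp
    have hu1ne : u1 ≠ 0 := by
      intro h; rw [h, h0l] at hu11; norm_num at hu11
    set u2 := J u1 with hu2_def
    have hu22 : φ u2 u2 = 1 := by rw [hu2_def, hherm]; exact hu11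
    have hu12 : φ u1 u2 = 0 := hxJx u1
    have hu21 : φ u2 u1 = 0 := by rw [hsymm]; exact hu12
    -- the orthogonal complement of u1, u2
    have mkfun : ∀ w : Fin 4 → ℝ, ∃ l : (Fin 4 → ℝ) →ₗ[ℝ] ℝ, ∀ v, l v = φ v w := by
      intro w
      exact ⟨{ toFun := fun v => φ v w, map_add' := fun a b => hadd a b w,
               map_smul' := fun c a => by simp [hsmul] }, fun v => rfl⟩
    obtain ⟨l1, hl1⟩ := mkfun u1
    obtain ⟨l2, hl2⟩ := mkfun u2
    set L : (Fin 4 → ℝ) →ₗ[ℝ] (Fin 2 → ℝ) :=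
      LinearMap.pi (fun i : Fin 2 => if i = 0 then l1 else l2) with hL_def
    have hmemW : ∀ v, v ∈ LinearMap.ker L ↔ φ v u1 = 0 ∧ φ v u2 = 0 := by
      intro v
      rw [LinearMap.mem_ker]
      constructor
      · intro h
        constructor
        · have h1 := congrFun h 0
          simpa [hL_def, LinearMap.pi_apply, hl1] using h1
        · have h1 := congrFun h 1
          simpa [hL_def, LinearMap.pi_apply, hl2] using h1
      · rintro ⟨h1, h2⟩
        funext i
        fin_cases i <;> simp [hL_def, LinearMap.pi_apply, hl1, hl2, h1, h2]
    have hkerL2 : 2 ≤ Module.finrank ℝ (LinearMap.ker L) := by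
      have h1 := LinearMap.finrank_range_add_finrank_ker L
      rw [hV4] at h1
      have h2 : Module.finrank ℝ (LinearMap.range L) ≤ 2 := by
        have h3 := Submodule.finrank_le (LinearMap.range L)
        simpa [Module.finrank_fin_fun] using h3
      omega
    have hWne : LinearMap.ker L ≠ ⊥ := by
      intro h; rw [h] at hkerL2; simp at hkerL2
    -- some vector in W with nonzero square
    have hWnz : ∃ y, y ∈ LinearMap.ker L ∧ φ y y ≠ 0 := by
      by_contra hcon
      push_neg at hcon
      have hpol : ∀ y ∈ LinearMap.ker L, ∀ z ∈ LinearMap.ker L, φ y z = 0 := by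
        intro y hy z hz
        have h1 := hcon (y + z) (Submodule.add_mem _ hy hz)
        have h2 := hcon y hy
        have h3 := hcon z hz
        rw [hadd, haddr, haddr, hsymm z y] at h1
        linarith
      obtain ⟨w0, hw0W, hw0⟩ := Submodule.exists_mem_ne_zero_of_ne_bot hWne
      apply hw0
      apply hnondeg
      intro y
      have hw01 : φ w0 u1 = 0 := ((hmemW w0).mp hw0W).1
      have hw02 : φ w0 u2 = 0 := ((hmemW w0).mp hw0W).2
      have hyW : (y - φ y u1 • u1 - φ y u2 • u2) ∈ LinearMap.ker L := by
        rw [hmemW]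
        constructor
        · rw [hsubl, hsubl, hsmul, hsmul, hu11, hu21]; ring
        · rw [hsubl, hsubl, hsmul, hsmul, hu12, hu22]; ring
      have h4 := hpol w0 hw0W _ hyW
      rw [hsubr, hsubr, hsmulr, hsmulr, hw01, hw02] at h4
      linarith
    obtain ⟨y0, hy0W, hy00⟩ := hWnz
    -- a negative vector in W
    have hy0neg : ∃ z, z ∈ LinearMap.ker L ∧ φ z z < 0 := by
      rcases lt_trichotomy (φ y0 y0) 0 with h | h | h
      · exact ⟨y0, hy0W, h⟩
      · exact absurd h hy00
      · exfalso
        obtain ⟨f, hff, cf, hcf⟩ := hnorm y0 h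
        have hfu1 : φ f u1 = 0 := by
          rw [hcf, hsmul, ((hmemW y0).mp hy0W).1]; ring
        have hfu2 : φ f u2 = 0 := by
          rw [hcf, hsmul, ((hmemW y0).mp hy0W).2]; ring
        have hu1f : φ u1 f = 0 := by rw [hsymm]; exact hfu1
        have hu1Jf : φ u1 (J f) = 0 := by
          have h1 : φ (J u1) f = - φ u1 (J f) := hJskew u1 f
          have h2 : φ (J u1) f = 0 := by rw [hsymm, ← hu2_def]; exact hfu2
          rw [h2] at h1
          linarith
        have huu := frame_build φ hadd hsmul hsymm J hJ2 hherm u1 f 1 1 hu11 hff hu1f hu1Jf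
        have hphiP := frame_phi φ hadd hsmul hsymm hnondeg ![u1, J u1, f, J f]
          ![1, 1, 1, 1] (by intro i; fin_cases i <;> norm_num)
          (by intro i j; exact huu i j)
        have hNne : N ≠ ⊥ := by
          intro hh; rw [hh] at hdimN; simp at hdimN
        obtain ⟨n, hnN, hn0⟩ := Submodule.exists_mem_ne_zero_of_ne_bot hNne
        have hneg := hNneg n hnN hn0
        have hpos : 0 ≤ φ n n := by
          rw [hphiP n n]
          apply Finset.sum_nonneg
          intro i _
          have h5 : ∀ i : Fin 4, (![(1:ℝ), 1, 1, 1]) i = 1 := by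
            intro i; fin_cases i <;> rfl
          rw [h5]
          simpa using mul_self_nonneg (φ n (![u1, J u1, f, J f] i))
        linarith
    obtain ⟨z, hzW, hzz⟩ := hy0neg
    have hzu1 : φ z u1 = 0 := ((hmemW z).mp hzW).1
    have hzu2 : φ z u2 = 0 := ((hmemW z).mp hzW).2
    -- normalize z
    set s := Real.sqrt (-(φ z z)) with hs_def
    have hs : s * s = -(φ z z) := Real.mul_self_sqrt (by linarith)
    have hs0 : s ≠ 0 := ne_of_gt (Real.sqrt_pos.mpr (by linarith))
    refine ⟨u1, s⁻¹ • z, hu11, ?_, ?_, ?_, hu1ne⟩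
    · have hzz' : φ z z = -(s * s) := by linarith
      rw [hsmul, hsmulr, hzz']
      field_simp
    · rw [hsmulr, hsymm u1 z, hzu1]; ring
    · have h1 : J (s⁻¹ • z) = s⁻¹ • J z := by rw [map_smul]
      rw [h1, hsmulr]
      have h2 : φ (J u1) z = - φ u1 (J z) := hJskew u1 z
      have h3 : φ (J u1) z = 0 := by rw [hsymm, ← hu2_def]; exact hzu2
      rw [h3] at h2
      have h4 : φ u1 (J z) = 0 := by linarith
      rw [h4]; ring
  -- ## the frame and the trace functional
  set e : Fin 4 → (Fin 4 → ℝ) := ![e1, J e1, e3, J e3] with he_def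
  set ε : Fin 4 → ℝ := ![1, 1, -1, -1] with hε_def
  have hε : ∀ i, ε i * ε i = 1 := by
    intro i; fin_cases i <;> norm_num [hε_def]
  have hee : ∀ i j, φ (e i) (e j) = if i = j then ε i else 0 := by
    have h1 := frame_build φ hadd hsmul hsymm J hJ2 hherm e1 e3 1 (-1) he11 he33 he13 he1J3
    intro i j
    rw [he_def, hε_def]
    exact h1 i j
  have hexp := frame_expand φ hadd hsmul hsymm hnondeg e ε hε hee
  have hphi := frame_phi φ hadd hsmul hsymm hnondeg e ε hε hee
  set τ : ((Fin 4 → ℝ) →ₗ[ℝ] (Fin 4 → ℝ)) → ℝ :=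
    fun X => ∑ i, ε i * φ (X (e i)) (e i) with hτ_def
  have tau_add : ∀ X Y, τ (X + Y) = τ X + τ Y := by
    intro X Y
    simp only [hτ_def]
    rw [← Finset.sum_add_distrib]
    refine Finset.sum_congr rfl (fun i _ => ?_)
    rw [LinearMap.add_apply, hadd]; ring
  have tau_neg : ∀ X, τ (-X) = - τ X := by
    intro X
    simp only [hτ_def]
    rw [← Finset.sum_neg_distrib]
    refine Finset.sum_congr rfl (fun i _ => ?_)
    rw [LinearMap.neg_apply, hnegl]; ring
  have tau_sub : ∀ X Y, τ (X - Y) = τ X - τ Y := by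
    intro X Y
    rw [sub_eq_add_neg, tau_add, tau_neg, sub_eq_add_neg]
  have tau_mul : ∀ X Y : (Fin 4 → ℝ) →ₗ[ℝ] (Fin 4 → ℝ),
      τ (X * Y) = ∑ i, ∑ j, (ε i * ε j) * (φ (Y (e i)) (e j) * φ (X (e j)) (e i)) := by
    intro X Y
    simp only [hτ_def]
    refine Finset.sum_congr rfl (fun i _ => ?_)
    rw [Module.End.mul_apply]
    conv_lhs => rw [hexp (Y (e i))]
    rw [map_sum, phi_sum_left φ hadd hsmul, Finset.mul_sum]
    refine Finset.sum_congr rfl (fun j _ => ?_)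
    rw [map_smul]
    rw [hsmul]
    ring
  have tau_comm : ∀ X Y : (Fin 4 → ℝ) →ₗ[ℝ] (Fin 4 → ℝ), τ (X * Y) = τ (Y * X) := by
    intro X Y
    rw [tau_mul X Y, tau_mul Y X, Finset.sum_comm]
    exact Finset.sum_congr rfl fun i _ => Finset.sum_congr rfl fun j _ => by ring
  -- ## operator identities
  have hJJ : J * J = -1 := by
    refine LinearMap.ext fun x => ?_
    simp [Module.End.mul_apply, hJ2]
  have hFD' : F * D = D * F := by
    refine LinearMap.ext fun x => ?_
    simp [Module.End.mul_apply, hFD]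
  have hr2 : F + J * F * J = D * J - J * D := by
    refine LinearMap.ext fun x => ?_
    simp only [LinearMap.add_apply, LinearMap.sub_apply, Module.End.mul_apply]
    have h1 := congrArg J (hJcond x)
    rw [map_add, map_add, hJ2, hJ2, hJ2] at h1
    funext i
    have h2 := congrFun h1 i
    simp only [Pi.add_apply, Pi.neg_apply, Pi.sub_apply] at h2 ⊢
    linarith
  set B : (Fin 4 → ℝ) →ₗ[ℝ] (Fin 4 → ℝ) := D + J * D * J with hB_def
  set A : (Fin 4 → ℝ) →ₗ[ℝ] (Fin 4 → ℝ) := D * J - J * D with hA_def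
  have hAJ : A * J = -B := by
    rw [hA_def, hB_def]
    refine LinearMap.ext fun x => ?_
    simp only [Module.End.mul_apply, LinearMap.add_apply, LinearMap.sub_apply,
      LinearMap.neg_apply, hJ2, map_add, map_sub, map_neg]
    abel
  have hJB : J * B = -A := by
    rw [hA_def, hB_def]
    refine LinearMap.ext fun x => ?_
    simp only [Module.End.mul_apply, LinearMap.add_apply, LinearMap.sub_apply,
      LinearMap.neg_apply, hJ2, map_add, map_sub, map_neg]
    abel
  have hBJop : B * J = A := by
    rw [hA_def, hB_def]
    refine LinearMap.ext fun x => ?_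
    simp only [Module.End.mul_apply, LinearMap.add_apply, LinearMap.sub_apply,
      LinearMap.neg_apply, hJ2, map_add, map_sub, map_neg]
    abel
  have hJAJ : J * (A * J) = A := by
    rw [hAJ]
    refine LinearMap.ext fun x => ?_
    have h1 := LinearMap.ext_iff.mp hJB x
    simp only [Module.End.mul_apply, LinearMap.neg_apply, map_neg] at h1 ⊢
    rw [h1, neg_neg]
  have hBneg : B = -(A * J) := by rw [hAJ, neg_neg]
  have hBB : B * B = A * (J * (A * J)) := by
    rw [hBneg]
    refine LinearMap.ext fun x => ?_
    simp only [Module.End.mul_apply, LinearMap.neg_apply, map_neg, neg_neg]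
  have hsplit : A = F + J * F * J := hr2.symm
  -- ## τ(B*B) = 0
  have htauBB : τ (B * B) = 0 := by
    have hstep1 : A * (J * (A * J)) = F * (J * (A * J)) + (J * F * J) * (J * (A * J)) := by
      nth_rewrite 1 [hsplit]
      refine LinearMap.ext fun x => ?_
      simp only [Module.End.mul_apply, LinearMap.add_apply]
    have hstep2 : (J * F * J) * (J * (A * J)) = -(J * (F * (A * J))) := by
      refine LinearMap.ext fun x => ?_
      simp only [Module.End.mul_apply, LinearMap.neg_apply, hJ2, map_neg, neg_neg]
    have hstep3 : τ (J * (F * (A * J))) = - τ (F * A) := by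
      rw [tau_comm J (F * (A * J))]
      have h1 : (F * (A * J)) * J = -(F * A) := by
        refine LinearMap.ext fun x => ?_
        simp only [Module.End.mul_apply, LinearMap.neg_apply, hJ2, map_neg]
      rw [h1, tau_neg]
    have hFA : τ (F * A) = 0 := by
      have h1 : F * A = (F * D) * J - (F * J) * D := by
        rw [hA_def]
        refine LinearMap.ext fun x => ?_
        simp only [Module.End.mul_apply, LinearMap.sub_apply, map_sub]
      have h2 : τ (F * A) = τ ((F * D) * J) - τ ((F * J) * D) := by rw [h1, tau_sub]
      rw [h2, hFD', tau_comm (F * J) D]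
      have h3 : D * (F * J) = (D * F) * J := by
        refine LinearMap.ext fun x => ?_
        simp only [Module.End.mul_apply]
      rw [h3]
      ring
    calc τ (B * B) = τ (A * (J * (A * J))) := by rw [hBB]
      _ = τ (F * (J * (A * J))) + τ ((J * F * J) * (J * (A * J))) := by rw [hstep1, tau_add]
      _ = τ (F * (J * (A * J))) + τ (-(J * (F * (A * J)))) := by rw [hstep2]
      _ = τ (F * A) + τ (-(J * (F * (A * J)))) := by rw [hJAJ]
      _ = τ (F * A) - τ (J * (F * (A * J))) := by rw [tau_neg]; ring
      _ = τ (F * A) + τ (F * A) := by rw [hstep3]; ring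
      _ = 0 := by rw [hFA]; ring
  -- ## B is skew and anticommutes with J
  have hBskew : ∀ x y, φ (B x) y = - φ x (B y) := by
    intro x y
    rw [hB_def]
    simp only [LinearMap.add_apply, Module.End.mul_apply]
    rw [hadd, haddr]
    have h1 : φ (J (D (J x))) y = - φ x (J (D (J y))) := by
      rw [hJskew (D (J x)) y, hDskew (J x) (J y), hJskew x (D (J y))]
      ring
    rw [hDskew, h1]
    ring
  have hBJanti : ∀ x, B (J x) = - (J (B x)) := by
    intro x
    have h1 := LinearMap.ext_iff.mp hBJop x
    have h2 := LinearMap.ext_iff.mp hJB x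
    rw [Module.End.mul_apply] at h1 h2
    rw [LinearMap.neg_apply] at h2
    rw [h1, h2, neg_neg]
  have hBJx : ∀ x, φ (B x) (J x) = 0 := by
    intro x
    have h1 : φ (B x) (J x) = - φ x (B (J x)) := hBskew x (J x)
    rw [hBJanti x, hnegr] at h1
    have h2 : φ x (J (B x)) = - φ (J x) (B x) := by
      have h3 := hJskew x (B x)
      have h4 : φ (J x) (B x) = - φ x (J (B x)) := hJskew x (B x)
      linarith
    rw [h2] at h1
    rw [hsymm (J x) (B x)] at h1
    linarith
  -- ## B = 0
  have hB0 : B = 0 := by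
    clear_value B A τ
    have hdiagB : ∀ x, φ (B x) x = 0 := by
      intro x
      have h1 := hBskew x x
      rw [hsymm x (B x)] at h1
      linarith
    have hsq : ∑ i, ε i * (∑ j, ε j * (φ (B (e i)) (e j) * φ (B (e i)) (e j))) = 0 := by
      have h1 : τ (B * B)
          = - ∑ i, ε i * (∑ j, ε j * (φ (B (e i)) (e j) * φ (B (e i)) (e j))) := by
        simp only [hτ_def]
        rw [← Finset.sum_neg_distrib]
        refine Finset.sum_congr rfl (fun i _ => ?_)
        rw [Module.End.mul_apply, hBskew (B (e i)) (e i), hphi (B (e i)) (B (e i))]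
        ring
      rw [htauBB] at h1
      linarith
    have hb01 : φ (B (e 0)) (e 1) = 0 := by
      have h1 : e 1 = J (e 0) := by rw [he_def]; rfl
      rw [h1]; exact hBJx (e 0)
    have hb10 : φ (B (e 1)) (e 0) = 0 := by
      have h1 := hBskew (e 1) (e 0)
      rw [hsymm (e 1) (B (e 0)), hb01] at h1
      simpa using h1
    have hb23 : φ (B (e 2)) (e 3) = 0 := by
      have h1 : e 3 = J (e 2) := by rw [he_def]; rfl
      rw [h1]; exact hBJx (e 2)
    have hb32 : φ (B (e 3)) (e 2) = 0 := by
      have h1 := hBskew (e 3) (e 2)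
      rw [hsymm (e 3) (B (e 2)), hb23] at h1
      simpa using h1
    have hε0 : ε 0 = 1 := by rw [hε_def]; rfl
    have hε1 : ε 1 = 1 := by rw [hε_def]; rfl
    have hε2 : ε 2 = -1 := by rw [hε_def]; rfl
    have hε3 : ε 3 = -1 := by rw [hε_def]; rfl
    rw [Fin.sum_univ_four] at hsq
    simp only [Fin.sum_univ_four, hε0, hε1, hε2, hε3, hdiagB (e 0), hdiagB (e 1),
      hdiagB (e 2), hdiagB (e 3), hb01, hb10, hb23, hb32] at hsq
    have n02 := mul_self_nonneg (φ (B (e 0)) (e 2))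
    have n03 := mul_self_nonneg (φ (B (e 0)) (e 3))
    have n12 := mul_self_nonneg (φ (B (e 1)) (e 2))
    have n13 := mul_self_nonneg (φ (B (e 1)) (e 3))
    have n20 := mul_self_nonneg (φ (B (e 2)) (e 0))
    have n21 := mul_self_nonneg (φ (B (e 2)) (e 1))
    have n30 := mul_self_nonneg (φ (B (e 3)) (e 0))
    have n31 := mul_self_nonneg (φ (B (e 3)) (e 1))
    have z02 : φ (B (e 0)) (e 2) = 0 := mul_self_eq_zero.mp (by linarith)
    have z03 : φ (B (e 0)) (e 3) = 0 := mul_self_eq_zero.mp (by linarith)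
    have z12 : φ (B (e 1)) (e 2) = 0 := mul_self_eq_zero.mp (by linarith)
    have z13 : φ (B (e 1)) (e 3) = 0 := mul_self_eq_zero.mp (by linarith)
    have z20 : φ (B (e 2)) (e 0) = 0 := mul_self_eq_zero.mp (by linarith)
    have z21 : φ (B (e 2)) (e 1) = 0 := mul_self_eq_zero.mp (by linarith)
    have z30 : φ (B (e 3)) (e 0) = 0 := mul_self_eq_zero.mp (by linarith)
    have z31 : φ (B (e 3)) (e 1) = 0 := mul_self_eq_zero.mp (by linarith)
    have hkey : ∀ i j, φ (B (e i)) (e j) = 0 := by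
      intro i j
      fin_cases i <;> fin_cases j <;>
        first
        | exact hdiagB _
        | exact hb01 | exact hb10 | exact hb23 | exact hb32
        | exact z02 | exact z03 | exact z12 | exact z13
        | exact z20 | exact z21 | exact z30 | exact z31
    have hBei : ∀ i, B (e i) = 0 := by
      intro i
      apply hnondeg
      intro y
      rw [hphi (B (e i)) y]
      apply Finset.sum_eq_zero
      intro j _
      rw [hkey i j]
      ring
    refine LinearMap.ext fun x => ?_
    rw [LinearMap.zero_apply]
    conv_lhs => rw [hexp x]
    rw [map_sum]
    apply Finset.sum_eq_zero
    intro i _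
    rw [map_smul, hBei i, smul_zero]
  -- ## F commutes with J
  have hA0 : A = 0 := by
    rw [← hBJop, hB0, zero_mul]
  have hFJc : F * J = J * F := by
    have h1 : F + J * F * J = 0 := by rw [hr2, hA0]
    have h2 := LinearMap.ext_iff.mp h1
    refine LinearMap.ext fun x => ?_
    have h3 := h2 (J x)
    simp only [LinearMap.add_apply, Module.End.mul_apply, LinearMap.zero_apply, hJ2,
      map_neg, neg_neg] at h3
    simp only [Module.End.mul_apply]
    rw [← sub_eq_add_neg] at h3
    exact sub_eq_zero.mp h3
  have hcomm : ∀ x, F (J x) = J (F x) := fun x => by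
    have h1 := LinearMap.ext_iff.mp hFJc x
    simpa [Module.End.mul_apply] using h1
  -- ## kernel stability and dimension
  have hker_stab : ∀ x ∈ LinearMap.ker F, J x ∈ LinearMap.ker F := by
    intro x hx
    rw [LinearMap.mem_ker] at *
    rw [hcomm, hx, map_zero]
  have heven : ∀ (W : Submodule ℝ (Fin 4 → ℝ)), (∀ x ∈ W, J x ∈ W) →
      Even (Module.finrank ℝ W) := by
    intro W hW
    set j : W →ₗ[ℝ] W := J.restrict hW with hj_def
    have hj2 : j ∘ₗ j = - LinearMap.id := by
      refine LinearMap.ext fun x => ?_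
      refine Subtype.ext ?_
      simp [hj_def, LinearMap.restrict_apply, hJ2]
    have hdet : LinearMap.det j * LinearMap.det j = (-1 : ℝ) ^ Module.finrank ℝ W := by
      rw [← LinearMap.det_comp, hj2]
      have h2 : (-LinearMap.id : W →ₗ[ℝ] W) = (-1 : ℝ) • LinearMap.id :=
        (neg_one_smul ℝ (LinearMap.id : W →ₗ[ℝ] W)).symm
      rw [h2, LinearMap.det_smul, LinearMap.det_id, mul_one]
    rcases Nat.even_or_odd (Module.finrank ℝ W) with h | h
    · exact h
    · exfalso
      rw [Odd.neg_one_pow h] at hdet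
      nlinarith [hdet, mul_self_nonneg (LinearMap.det j)]
  have hkerne : LinearMap.ker F ≠ ⊥ := by
    intro hbot
    obtain ⟨k, hk⟩ := hFnil
    have hinj : Function.Injective F := LinearMap.ker_eq_bot.mp hbot
    have hinjk : Function.Injective (F ^ k) := by
      have h1 : ⇑(F ^ k) = (⇑F)^[k] := by
        funext v; exact Module.End.pow_apply F k v
      rw [h1]; exact Function.Injective.iterate hinj k
    have h2 : (F ^ k) e1 = (F ^ k) 0 := by rw [hk]; simp
    exact he1ne (hinjk h2)
  have hdimker : Module.finrank ℝ (LinearMap.ker F) = 2 := by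
    have hev := heven (LinearMap.ker F) hker_stab
    have hle : Module.finrank ℝ (LinearMap.ker F) ≤ 4 := by
      have h1 := Submodule.finrank_le (LinearMap.ker F)
      rwa [hV4] at h1
    have hne0 : Module.finrank ℝ (LinearMap.ker F) ≠ 0 := by
      intro h
      exact hkerne (Submodule.finrank_eq_zero.mp h)
    have hne4 : Module.finrank ℝ (LinearMap.ker F) ≠ 4 := by
      intro h
      have h1 : LinearMap.ker F = ⊤ := Submodule.eq_top_of_finrank_eq (by rw [h, hV4])
      exact hF0 (LinearMap.ker_eq_top.mp h1)
    obtain ⟨m, hm⟩ := hev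
    omega
  have hFF : F * F = 0 := by
    by_contra hne
    have hstab2 : ∀ x ∈ LinearMap.ker (F * F), J x ∈ LinearMap.ker (F * F) := by
      intro x hx
      rw [LinearMap.mem_ker, Module.End.mul_apply] at *
      rw [hcomm, hcomm, hx, map_zero]
    have hev2 := heven _ hstab2
    have hle2 : LinearMap.ker F ≤ LinearMap.ker (F * F) := by
      intro x hx
      rw [LinearMap.mem_ker] at *
      rw [Module.End.mul_apply, hx, map_zero]
    have h2le : 2 ≤ Module.finrank ℝ (LinearMap.ker (F * F)) := by
      rw [← hdimker]; exact Submodule.finrank_mono hle2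
    have hle4 : Module.finrank ℝ (LinearMap.ker (F * F)) ≤ 4 := by
      have h1 := Submodule.finrank_le (LinearMap.ker (F * F))
      rwa [hV4] at h1
    have hne4 : Module.finrank ℝ (LinearMap.ker (F * F)) ≠ 4 := by
      intro h
      have h1 : LinearMap.ker (F * F) = ⊤ := Submodule.eq_top_of_finrank_eq (by rw [h, hV4])
      exact hne (LinearMap.ker_eq_top.mp h1)
    have hdim2 : Module.finrank ℝ (LinearMap.ker (F * F)) = 2 := by
      obtain ⟨m, hm⟩ := hev2
      omega
    have hkk : LinearMap.ker F = LinearMap.ker (F * F) :=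
      Submodule.eq_of_le_of_finrank_le hle2 (by rw [hdimker, hdim2])
    have hpow : ∀ k : ℕ, LinearMap.ker (F ^ (k+1)) = LinearMap.ker F := by
      intro k
      induction k with
      | zero => rw [pow_one]
      | succ n ih =>
        apply le_antisymm
        · intro x hx
          rw [LinearMap.mem_ker] at *
          have h1 : (F ^ (n+1)) (F x) = 0 := by
            rw [← Module.End.mul_apply, ← pow_succ]
            exact hx
          have h2 : F x ∈ LinearMap.ker (F ^ (n+1)) := h1
          rw [ih, LinearMap.mem_ker] at h2
          have h3 : x ∈ LinearMap.ker (F * F) := by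
            rw [LinearMap.mem_ker, Module.End.mul_apply]; exact h2
          rw [← hkk, LinearMap.mem_ker] at h3
          exact h3
        · intro x hx
          rw [LinearMap.mem_ker] at *
          rw [pow_succ, Module.End.mul_apply, hx, map_zero]
    obtain ⟨k, hk⟩ := hFnil
    rcases k with _ | k'
    · rw [pow_zero] at hk
      have h1 := LinearMap.ext_iff.mp hk e1
      rw [Module.End.one_apply, LinearMap.zero_apply] at h1
      exact he1ne h1
    · have h1 : LinearMap.ker (F ^ (k'+1)) = ⊤ := by rw [hk]; exact LinearMap.ker_zero
      rw [hpow k'] at h1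
      exact hF0 (LinearMap.ker_eq_top.mp h1)
  have hrange : LinearMap.range F = LinearMap.ker F := by
    have hle : LinearMap.range F ≤ LinearMap.ker F := by
      rintro x ⟨y, rfl⟩
      rw [LinearMap.mem_ker, ← Module.End.mul_apply, hFF, LinearMap.zero_apply]
    have h1 : Module.finrank ℝ (LinearMap.range F) = 2 := by
      have h2 := LinearMap.finrank_range_add_finrank_ker F
      rw [hV4, hdimker] at h2
      omega
    exact Submodule.eq_of_le_of_finrank_le hle (by rw [hdimker, h1])
  have hmap : Submodule.map J (LinearMap.ker F) = LinearMap.ker F := by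
    apply le_antisymm
    · rintro x ⟨y, hy, rfl⟩
      exact hker_stab y hy
    · intro x hx
      rw [LinearMap.mem_ker] at hx
      refine ⟨-(J x), ?_, ?_⟩
      · simp only [SetLike.mem_coe, LinearMap.mem_ker, map_neg, hcomm, hx, map_zero, neg_zero]
      · rw [map_neg, hJ2, neg_neg]
  refine ⟨hmap, hrange, hdimker, hker_stab, ?_⟩
  · intro x hx y hy
    rw [← hrange] at hx
    obtain ⟨a, rfl⟩ := hx
    rw [LinearMap.mem_ker] at hy
    rw [hFskew, hy, h0r, neg_zero]
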